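/- For every odd integer t ≥ 3, there exists a 3-SCHGDD of type (6, 2^t). -/

import Mathlib

/-- A `k`-SCHGDD of type `(n, m^t)`: a finite family of `k`-element base blocks in
`Fin n × ZMod (m*t)` such that no block has two points in the same group (same first
coordinate), and for every ordered pair `i ≠ j` the difference list `Δ_{ij}` covers
`ZMod (m*t)` minus the subgroup generated by `t` exactly once, hitting no element of
that subgroup. -/
def IsSCHGDD (k n m t : ℕ) (B : Finset (Finset (Fin n × ZMod (m * t)))) : Prop :=
  (∀ b ∈ B, b.card = k) ∧
  (∀ b ∈ B, ∀ p ∈ b, ∀ q ∈ b, p.1 = q.1 → p = q) ∧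
  (∀ i j : Fin n, i ≠ j → ∀ z : ZMod (m * t),
    (z ∈ AddSubgroup.zmultiples ((t : ZMod (m * t))) →
      (∑ b ∈ B, ((b ×ˢ b).filter
        (fun pq => pq.1.1 = i ∧ pq.2.1 = j ∧ pq.1.2 - pq.2.2 = z)).card) = 0) ∧
    (z ∉ AddSubgroup.zmultiples ((t : ZMod (m * t))) →
      (∑ b ∈ B, ((b ×ˢ b).filter
        (fun pq => pq.1.1 = i ∧ pq.2.1 = j ∧ pq.1.2 - pq.2.2 = z)).card) = 1))

/-- Existence of a `k`-SCHGDD of type `(n, m^t)`. -/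
def ExistsSCHGDD (k n m t : ℕ) : Prop :=
  ∃ B : Finset (Finset (Fin n × ZMod (m * t))), IsSCHGDD k n m t B

section SCHGDDproof

open Finset

namespace SCHAux

/-- embed `Fin 5` into `Fin 6` -/
def g (a : Fin 5) : Fin 6 := ⟨a.val, by omega⟩

lemma g_inj {a b : Fin 5} (h : g a = g b) : a = b := by
  simp only [g, Fin.ext_iff] at h ⊢; exact h

lemma g_ne_five (a : Fin 5) : g a ≠ 5 := by
  intro h
  have h5 : (5 : Fin 6).val = 5 := rfl
  have hv := congrArg Fin.val h
  have ha := a.isLt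
  simp only [g, h5] at hv
  omega

lemma five_ne_g (a : Fin 5) : (5 : Fin 6) ≠ g a := fun h => g_ne_five a h.symm

/-- groups of the block -/
def Gr (o : Bool) (a : Fin 5) : Fin 3 → Fin 6 :=
  bif o then ![g a, g (a+1), g (a+3)] else ![5, g a, g (a+1)]

/-- values of the block -/
def Vl (t : ℕ) (o : Bool) (w : ℕ) : Fin 3 → ZMod (2*t) :=
  bif o then ![0, -((t+2*w : ℕ) : ZMod (2*t)), -((t+4*w : ℕ) : ZMod (2*t))]
  else ![0, -((w : ℕ) : ZMod (2*t)), ((w : ℕ) : ZMod (2*t))]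

@[simp] lemma Gr_f0 (a : Fin 5) : Gr false a 0 = 5 := rfl
@[simp] lemma Gr_f1 (a : Fin 5) : Gr false a 1 = g a := rfl
@[simp] lemma Gr_f2 (a : Fin 5) : Gr false a 2 = g (a+1) := rfl
@[simp] lemma Gr_t0 (a : Fin 5) : Gr true a 0 = g a := rfl
@[simp] lemma Gr_t1 (a : Fin 5) : Gr true a 1 = g (a+1) := rfl
@[simp] lemma Gr_t2 (a : Fin 5) : Gr true a 2 = g (a+3) := rfl

@[simp] lemma Vl_f0 (t w : ℕ) : Vl t false w 0 = 0 := rfl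
@[simp] lemma Vl_f1 (t w : ℕ) : Vl t false w 1 = -((w : ℕ) : ZMod (2*t)) := rfl
@[simp] lemma Vl_f2 (t w : ℕ) : Vl t false w 2 = ((w : ℕ) : ZMod (2*t)) := rfl
@[simp] lemma Vl_t0 (t w : ℕ) : Vl t true w 0 = 0 := rfl
@[simp] lemma Vl_t1 (t w : ℕ) : Vl t true w 1 = -((t+2*w : ℕ) : ZMod (2*t)) := rfl
@[simp] lemma Vl_t2 (t w : ℕ) : Vl t true w 2 = -((t+4*w : ℕ) : ZMod (2*t)) := rfl

lemma Gr_injective (o : Bool) (a : Fin 5) : Function.Injective (Gr o a) := by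
  intro u v h
  cases o <;> fin_cases u <;> fin_cases v <;>
    simp_all [Gr, g, Fin.ext_iff, Fin.add_def] <;> omega

def pts (t : ℕ) (d : Bool × Fin 5 × ℕ) (u : Fin 3) : Fin 6 × ZMod (2*t) :=
  (Gr d.1 d.2.1 u, Vl t d.1 d.2.2 u)

lemma pts_injective (t : ℕ) (d : Bool × Fin 5 × ℕ) : Function.Injective (pts t d) :=
  fun u v h => Gr_injective d.1 d.2.1 (congrArg Prod.fst h)

def blk (t : ℕ) (d : Bool × Fin 5 × ℕ) : Finset (Fin 6 × ZMod (2*t)) :=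
  Finset.image (pts t d) Finset.univ

lemma mem_blk {t : ℕ} {d : Bool × Fin 5 × ℕ} {x : Fin 6 × ZMod (2*t)} :
    x ∈ blk t d ↔ x = pts t d 0 ∨ x = pts t d 1 ∨ x = pts t d 2 := by
  simp only [blk, mem_image, mem_univ, true_and]
  constructor
  · rintro ⟨u, hu⟩; fin_cases u
    · exact Or.inl hu.symm
    · exact Or.inr (Or.inl hu.symm)
    · exact Or.inr (Or.inr hu.symm)
  · rintro (h|h|h) <;> exact ⟨_, h.symm⟩

def Dom (t : ℕ) : Finset (Bool × Fin 5 × ℕ) := univ ×ˢ univ ×ˢ Finset.Icc 1 (t-1)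

def BB (t : ℕ) : Finset (Finset (Fin 6 × ZMod (2*t))) := (Dom t).image (blk t)


section Arith

variable {t : ℕ}

lemma mod_char (a n : ℕ) (h0 : 0 < n) (h : a < 3*n) :
    ∃ q ≤ 2, a = n*q + a % n ∧ a % n < n := by
  refine ⟨a / n, ?_, ?_, Nat.mod_lt _ h0⟩
  · have : a / n < 3 := (Nat.div_lt_iff_lt_mul h0).2 (by omega)
    omega
  · exact (Nat.div_add_mod' a n).symm.trans (by ring)

lemma cast_eq_z (ht : 3 ≤ t) (a : ℕ) (z : ZMod (2*t)) :
    ((a : ZMod (2*t)) = z) ↔ a % (2*t) = z.val := by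
  haveI : NeZero (2*t) := ⟨by omega⟩
  constructor
  · rintro rfl; exact (ZMod.val_natCast _ a).symm
  · intro h
    apply ZMod.val_injective
    rw [ZMod.val_natCast, h]

lemma z_eq_zero_iff (ht : 3 ≤ t) (z : ZMod (2*t)) : z = 0 ↔ z.val = 0 := by
  haveI : NeZero (2*t) := ⟨by omega⟩
  constructor
  · rintro rfl; exact ZMod.val_zero
  · intro h; apply ZMod.val_injective; rw [h, ZMod.val_zero]

lemma z_eq_t_iff (ht : 3 ≤ t) (z : ZMod (2*t)) : z = ((t : ℕ) : ZMod (2*t)) ↔ z.val = t := by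
  rw [eq_comm, cast_eq_z ht, Nat.mod_eq_of_lt (by omega), eq_comm]

lemma neg_val' (ht : 3 ≤ t) {z : ZMod (2*t)} (hz : z ≠ 0) : (-z).val = 2*t - z.val := by
  haveI : NeZero (2*t) := ⟨by omega⟩
  rw [ZMod.neg_val, if_neg hz]

lemma val_lt' (ht : 3 ≤ t) (z : ZMod (2*t)) : z.val < 2*t := by
  haveI : NeZero (2*t) := ⟨by omega⟩
  exact ZMod.val_lt z

lemma memS_iff (ht : 3 ≤ t) (z : ZMod (2*t)) :
    z ∈ AddSubgroup.zmultiples ((t : ℕ) : ZMod (2*t)) ↔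
      z = 0 ∨ z = ((t : ℕ) : ZMod (2*t)) := by
  have h2 : ((t : ℕ) : ZMod (2*t)) + ((t : ℕ) : ZMod (2*t)) = 0 := by
    have := ZMod.natCast_self (2*t)
    push_cast at this
    linear_combination this
  constructor
  · rintro ⟨k, rfl⟩
    rcases Int.even_or_odd k with ⟨m, hm⟩ | ⟨m, hm⟩
    · left
      subst hm
      show (m + m) • ((t : ℕ) : ZMod (2*t)) = 0
      rw [zsmul_eq_mul]
      push_cast
      linear_combination ((m : ZMod (2*t))) * h2
    · right
      subst hm
      show (2 * m + 1) • ((t : ℕ) : ZMod (2*t)) = ((t : ℕ) : ZMod (2*t))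
      rw [zsmul_eq_mul]
      push_cast
      linear_combination ((m : ZMod (2*t))) * h2
  · rintro (rfl | rfl)
    · exact zero_mem _
    · exact AddSubgroup.mem_zmultiples _

end Arith

section Inj

variable {t : ℕ}

lemma cast_nat_inj (ht : 3 ≤ t) {a b : ℕ} (ha : a < 2*t) (hb : b < 2*t)
    (h : (a : ZMod (2*t)) = (b : ZMod (2*t))) : a = b := by
  rw [ZMod.natCast_eq_natCast_iff', Nat.mod_eq_of_lt ha, Nat.mod_eq_of_lt hb] at h
  exact h

lemma w_ne_zero (ht : 3 ≤ t) {w : ℕ} (hw : w ∈ Finset.Icc 1 (t-1)) :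
    ((w : ℕ) : ZMod (2*t)) ≠ 0 := by
  simp only [Finset.mem_Icc] at hw
  intro h
  rw [z_eq_zero_iff ht, ZMod.val_natCast, Nat.mod_eq_of_lt (by omega)] at h
  omega

lemma t2w_inj (ht : 3 ≤ t) {w w' : ℕ} (hw : w ∈ Finset.Icc 1 (t-1)) (hw' : w' ∈ Finset.Icc 1 (t-1))
    (h : ((t+2*w : ℕ) : ZMod (2*t)) = ((t+2*w' : ℕ) : ZMod (2*t))) : w = w' := by
  simp only [Finset.mem_Icc] at hw hw'
  rw [ZMod.natCast_eq_natCast_iff'] at h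
  obtain ⟨q, hq, he, hl⟩ := mod_char (t+2*w) (2*t) (by omega) (by omega)
  obtain ⟨q', hq', he', hl'⟩ := mod_char (t+2*w') (2*t) (by omega) (by omega)
  interval_cases q <;> interval_cases q' <;> omega

lemma t4w_inj (ht : 3 ≤ t) (htodd : Odd t) {w w' : ℕ}
    (hw : w ∈ Finset.Icc 1 (t-1)) (hw' : w' ∈ Finset.Icc 1 (t-1))
    (h : ((t+4*w : ℕ) : ZMod (2*t)) = ((t+4*w' : ℕ) : ZMod (2*t))) : w = w' := by
  obtain ⟨k, hk⟩ := htodd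
  simp only [Finset.mem_Icc] at hw hw'
  rw [ZMod.natCast_eq_natCast_iff'] at h
  obtain ⟨q, hq, he, hl⟩ := mod_char (t+4*w) (2*t) (by omega) (by omega)
  obtain ⟨q', hq', he', hl'⟩ := mod_char (t+4*w') (2*t) (by omega) (by omega)
  interval_cases q <;> interval_cases q' <;> omega

lemma t2w_ne_zero (ht : 3 ≤ t) (htodd : Odd t) {w : ℕ} (hw : w ∈ Finset.Icc 1 (t-1)) :
    ((t+2*w : ℕ) : ZMod (2*t)) ≠ 0 := by
  obtain ⟨k, hk⟩ := htodd
  simp only [Finset.mem_Icc] at hw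
  intro h
  rw [z_eq_zero_iff ht, ZMod.val_natCast] at h
  obtain ⟨q, hq, he, hl⟩ := mod_char (t+2*w) (2*t) (by omega) (by omega)
  interval_cases q <;> omega

lemma t4w_ne_zero (ht : 3 ≤ t) (htodd : Odd t) {w : ℕ} (hw : w ∈ Finset.Icc 1 (t-1)) :
    ((t+4*w : ℕ) : ZMod (2*t)) ≠ 0 := by
  obtain ⟨k, hk⟩ := htodd
  simp only [Finset.mem_Icc] at hw
  intro h
  rw [z_eq_zero_iff ht, ZMod.val_natCast] at h
  obtain ⟨q, hq, he, hl⟩ := mod_char (t+4*w) (2*t) (by omega) (by omega)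
  interval_cases q <;> omega

lemma fin5_add_one (a : Fin 5) : a ≠ a + 1 := by revert a; decide
lemma fin5_add_two (a : Fin 5) : a ≠ a + 2 := by revert a; decide

lemma blk_injOn (ht : 3 ≤ t) (htodd : Odd t) : Set.InjOn (blk t) (Dom t) := by
  rintro ⟨o, a, w⟩ hd ⟨o', a', w'⟩ hd' h
  simp only [Dom, Finset.coe_product, Set.mem_prod, Finset.mem_coe, Finset.mem_univ,
    Finset.mem_Icc, true_and] at hd hd'
  have hwI : w ∈ Finset.Icc 1 (t-1) := Finset.mem_Icc.2 hd
  have hw'I : w' ∈ Finset.Icc 1 (t-1) := Finset.mem_Icc.2 hd'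
  have key : ∀ u : Fin 3, pts t (o, a, w) u ∈ blk t (o', a', w') := by
    intro u; rw [← h]; exact Finset.mem_image_of_mem _ (Finset.mem_univ u)
  clear h
  cases o <;> cases o'
  · -- false false
    have h1 := mem_blk.1 (key 1)
    simp only [pts, Prod.ext_iff, Gr_f0, Gr_f1, Gr_f2, Vl_f0, Vl_f1, Vl_f2] at h1
    rcases h1 with ⟨hg, hv⟩ | ⟨hg, hv⟩ | ⟨hg, hv⟩
    · exact absurd hg (g_ne_five a)
    · have ha : a = a' := g_inj hg
      have hww : w = w' := cast_nat_inj ht (by omega) (by omega) (neg_injective hv)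
      simp [ha, hww]
    · have ha : a = a' + 1 := g_inj hg
      have h2 := mem_blk.1 (key 2)
      simp only [pts, Prod.ext_iff, Gr_f0, Gr_f1, Gr_f2, Vl_f0, Vl_f1, Vl_f2] at h2
      rcases h2 with ⟨hg2, hv2⟩ | ⟨hg2, hv2⟩ | ⟨hg2, hv2⟩
      · exact absurd hg2 (g_ne_five (a+1))
      · have h3 : a + 1 = a' := g_inj hg2
        rw [ha] at h3
        exact absurd h3.symm (by rw [add_assoc]; exact fin5_add_two a')
      · have h3 : a = a' := add_right_cancel (g_inj hg2)
        rw [h3] at ha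
        exact absurd ha (fin5_add_one a')
  · -- false true : (5,0) in true-block
    have h1 := mem_blk.1 (key 0)
    simp only [pts, Prod.ext_iff, Gr_f0, Gr_t0, Gr_t1, Gr_t2, Vl_f0] at h1
    rcases h1 with ⟨hg, -⟩ | ⟨hg, -⟩ | ⟨hg, -⟩ <;> exact absurd hg.symm (g_ne_five _)
  · -- true false : (g a, 0) in false-block
    have h1 := mem_blk.1 (key 0)
    simp only [pts, Prod.ext_iff, Gr_t0, Gr_f0, Gr_f1, Gr_f2, Vl_t0, Vl_f0, Vl_f1, Vl_f2] at h1
    rcases h1 with ⟨hg, -⟩ | ⟨-, hv⟩ | ⟨-, hv⟩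
    · exact absurd hg (g_ne_five a)
    · exact absurd (neg_eq_zero.1 hv.symm) (w_ne_zero ht hw'I)
    · exact absurd hv.symm (w_ne_zero ht hw'I)
  · -- true true
    have h1 := mem_blk.1 (key 0)
    simp only [pts, Prod.ext_iff, Gr_t0, Gr_t1, Gr_t2, Vl_t0, Vl_t1, Vl_t2] at h1
    rcases h1 with ⟨hg, -⟩ | ⟨-, hv⟩ | ⟨-, hv⟩
    · have ha : a = a' := g_inj hg
      have h2 := mem_blk.1 (key 1)
      simp only [pts, Prod.ext_iff, Gr_t0, Gr_t1, Gr_t2, Vl_t0, Vl_t1, Vl_t2] at h2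
      rcases h2 with ⟨-, hv2⟩ | ⟨-, hv2⟩ | ⟨hg2, -⟩
      · exact absurd (neg_eq_zero.1 hv2) (t2w_ne_zero ht htodd hwI)
      · have hww : w = w' := t2w_inj ht hwI hw'I (neg_injective hv2)
        simp [ha, hww]
      · have h3 : a + 1 = a' + 3 := g_inj hg2
        rw [ha] at h3
        have : a' + 1 + 2 = a' + 3 := by rw [add_assoc]; norm_num; rfl
        rw [← this] at h3
        exact absurd h3 (fin5_add_two (a'+1))
    · exact absurd (neg_eq_zero.1 hv.symm) (t2w_ne_zero ht htodd hw'I)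
    · exact absurd (neg_eq_zero.1 hv.symm) (t4w_ne_zero ht htodd hw'I)

end Inj


section Cnt

variable {t : ℕ}

def Cnt (t : ℕ) (i j : Fin 6) (z : ZMod (2*t)) : ℕ :=
  ∑ b ∈ BB t, ((b ×ˢ b).filter
    (fun pq => pq.1.1 = i ∧ pq.2.1 = j ∧ pq.1.2 - pq.2.2 = z)).card

lemma card_filter_prod_image {α : Type*} [DecidableEq α] (f : Fin 3 → α)
    (hf : Function.Injective f) (P : α × α → Prop) [DecidablePred P] :
    ((Finset.image f Finset.univ ×ˢ Finset.image f Finset.univ).filter P).card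
      = (Finset.univ.filter fun uv : Fin 3 × Fin 3 => P (f uv.1, f uv.2)).card := by
  have himg : (Finset.image f Finset.univ ×ˢ Finset.image f Finset.univ)
      = Finset.image (fun uv : Fin 3 × Fin 3 => (f uv.1, f uv.2)) Finset.univ := by
    ext x
    simp only [Finset.mem_product, Finset.mem_image, Finset.mem_univ, true_and]
    constructor
    · rintro ⟨⟨u, hu⟩, ⟨v, hv⟩⟩
      exact ⟨(u,v), by simp [hu, hv, Prod.ext_iff]⟩
    · rintro ⟨⟨u,v⟩, rfl⟩
      exact ⟨⟨u, rfl⟩, ⟨v, rfl⟩⟩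
  rw [himg, Finset.filter_image]
  rw [Finset.card_image_of_injective]
  intro uv uv' h
  rw [Prod.ext_iff] at h ⊢
  exact ⟨hf h.1, hf h.2⟩

lemma cnt_eq (ht : 3 ≤ t) (htodd : Odd t) (i j : Fin 6) (z : ZMod (2*t)) :
    Cnt t i j z = ∑ o : Bool, ∑ a : Fin 5, ∑ w ∈ Finset.Icc 1 (t-1),
      (Finset.univ.filter fun uv : Fin 3 × Fin 3 =>
        Gr o a uv.1 = i ∧ Gr o a uv.2 = j ∧ Vl t o w uv.1 - Vl t o w uv.2 = z).card := by
  rw [Cnt, BB, Finset.sum_image (fun d hd d' hd' h => blk_injOn ht htodd hd hd' h)]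
  rw [Dom]
  simp only [Finset.sum_product]
  refine Finset.sum_congr rfl fun o _ => Finset.sum_congr rfl fun a _ =>
    Finset.sum_congr rfl fun w _ => ?_
  have hb : blk t (o, a, w) = Finset.image (pts t (o, a, w)) Finset.univ := rfl
  rw [hb, card_filter_prod_image (pts t (o,a,w)) (pts_injective t _)]
  exact congrArg Finset.card (Finset.filter_congr fun uv _ => by simp [pts])

end Cnt


section CL
variable {t : ℕ}

@[simp] lemma g_eq_five_iff (a : Fin 5) : g a = (5 : Fin 6) ↔ False :=
  ⟨fun h => g_ne_five a h, False.elim⟩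
@[simp] lemma five_eq_g_iff (a : Fin 5) : (5 : Fin 6) = g a ↔ False :=
  ⟨fun h => five_ne_g a h, False.elim⟩
@[simp] lemma g_eq_g_iff (a b : Fin 5) : g a = g b ↔ a = b :=
  ⟨g_inj, fun h => by rw [h]⟩

lemma deadA (P : Prop) (x y : Fin 5) : (x = y ∧ (x = y+1 ∧ P)) ↔ False := by
  constructor
  · rintro ⟨h1, h2, -⟩; revert x y; decide
  · exact False.elim
lemma deadB (P : Prop) (x y : Fin 5) : (x+1 = y ∧ (x = y+1 ∧ P)) ↔ False := by
  constructor
  · rintro ⟨h1, h2, -⟩; revert x y; decide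
  · exact False.elim
lemma deadC (P : Prop) (x y : Fin 5) : (x+1 = y ∧ (x = y ∧ P)) ↔ False := by
  constructor
  · rintro ⟨h1, h2, -⟩; revert x y; decide
  · exact False.elim
lemma deadD (P : Prop) (x y : Fin 5) : (x = y ∧ (x+3 = y+1 ∧ P)) ↔ False := by
  constructor
  · rintro ⟨h1, h2, -⟩; revert x y; decide
  · exact False.elim
lemma deadE (P : Prop) (x y : Fin 5) : (x+1 = y ∧ (x+3 = y+1 ∧ P)) ↔ False := by
  constructor
  · rintro ⟨h1, h2, -⟩; revert x y; decide
  · exact False.elim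
lemma deadF (P : Prop) (x y : Fin 5) : (x+3 = y ∧ (x = y+1 ∧ P)) ↔ False := by
  constructor
  · rintro ⟨h1, h2, -⟩; revert x y; decide
  · exact False.elim
lemma deadG (P : Prop) (x y : Fin 5) : (x+3 = y ∧ (x = y ∧ P)) ↔ False := by
  constructor
  · rintro ⟨h1, h2, -⟩; revert x y; decide
  · exact False.elim
lemma deadH (P : Prop) (x y : Fin 5) : (x+3 = y ∧ (x+3 = y+1 ∧ P)) ↔ False := by
  constructor
  · rintro ⟨h1, h2, -⟩; revert x y; decide
  · exact False.elim
lemma deadI (P : Prop) (x y : Fin 5) : (x = y ∧ (x = y+2 ∧ P)) ↔ False := by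
  constructor
  · rintro ⟨h1, h2, -⟩; revert x y; decide
  · exact False.elim
lemma deadJ (P : Prop) (x y : Fin 5) : (x = y ∧ (x+1 = y+2 ∧ P)) ↔ False := by
  constructor
  · rintro ⟨h1, h2, -⟩; revert x y; decide
  · exact False.elim
lemma deadK (P : Prop) (x y : Fin 5) : (x+1 = y ∧ (x = y+2 ∧ P)) ↔ False := by
  constructor
  · rintro ⟨h1, h2, -⟩; revert x y; decide
  · exact False.elim
lemma deadL (P : Prop) (x y : Fin 5) : (x+1 = y ∧ (x+1 = y+2 ∧ P)) ↔ False := by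
  constructor
  · rintro ⟨h1, h2, -⟩; revert x y; decide
  · exact False.elim
lemma deadM (P : Prop) (x y : Fin 5) : (x = y ∧ (x+3 = y+2 ∧ P)) ↔ False := by
  constructor
  · rintro ⟨h1, h2, -⟩; revert x y; decide
  · exact False.elim
lemma deadN (P : Prop) (x y : Fin 5) : (x+3 = y ∧ (x+1 = y+2 ∧ P)) ↔ False := by
  constructor
  · rintro ⟨h1, h2, -⟩; revert x y; decide
  · exact False.elim
lemma liveA (P : Prop) (x y : Fin 5) : (x+1 = y ∧ (x+3 = y+2 ∧ P)) ↔ (x+1 = y ∧ P) := by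
  constructor
  · rintro ⟨h1, -, hp⟩; exact ⟨h1, hp⟩
  · rintro ⟨h1, hp⟩
    subst h1
    exact ⟨rfl, (by decide : ∀ u : Fin 5, u+3 = u+1+2) x, hp⟩
lemma liveB (P : Prop) (x y : Fin 5) : (x+3 = y ∧ (x = y+2 ∧ P)) ↔ (x = y+2 ∧ P) := by
  constructor
  · rintro ⟨-, h2, hp⟩; exact ⟨h2, hp⟩
  · rintro ⟨h2, hp⟩
    subst h2
    exact ⟨(by decide : ∀ u : Fin 5, u+2+3 = u) y, rfl, hp⟩

lemma c_false_T1 (a a' : Fin 5) (w : ℕ) (z : ZMod (2*t)) :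
    (Finset.univ.filter fun uv : Fin 3 × Fin 3 =>
      Gr false a' uv.1 = g a ∧ Gr false a' uv.2 = 5 ∧
        Vl t false w uv.1 - Vl t false w uv.2 = z).card
    = (if a' = a ∧ -((w : ℕ) : ZMod (2*t)) = z then 1 else 0)
      + (if a' + 1 = a ∧ ((w : ℕ) : ZMod (2*t)) = z then 1 else 0) := by
  rw [Finset.card_filter, Fintype.sum_prod_type]
  simp only [Fin.sum_univ_three, Gr_f0, Gr_f1, Gr_f2, Vl_f0, Vl_f1, Vl_f2,
    g_eq_five_iff, five_eq_g_iff, g_eq_g_iff, sub_zero, zero_sub, sub_self,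
    neg_neg, false_and, and_false, if_false, true_and, and_true, eq_self_iff_true,
    and_self_left, add_zero, zero_add, add_left_inj,
    deadA, deadB, deadC, deadD, deadE, deadF, deadG, deadH, deadI, deadJ, deadK,
    deadL, deadM, deadN, liveA, liveB]

lemma c_true_T1 (a a' : Fin 5) (w : ℕ) (z : ZMod (2*t)) :
    (Finset.univ.filter fun uv : Fin 3 × Fin 3 =>
      Gr true a' uv.1 = g a ∧ Gr true a' uv.2 = 5 ∧
        Vl t true w uv.1 - Vl t true w uv.2 = z).card = 0 := by
  rw [Finset.card_filter, Fintype.sum_prod_type]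
  simp only [Fin.sum_univ_three, Gr_t0, Gr_t1, Gr_t2, Vl_t0, Vl_t1, Vl_t2,
    g_eq_five_iff, five_eq_g_iff, g_eq_g_iff, sub_zero, zero_sub, sub_self,
    neg_neg, false_and, and_false, if_false, true_and, and_true, eq_self_iff_true,
    and_self_left, add_zero, zero_add, add_left_inj,
    deadA, deadB, deadC, deadD, deadE, deadF, deadG, deadH, deadI, deadJ, deadK,
    deadL, deadM, deadN, liveA, liveB]

lemma c_false_T2 (a a' : Fin 5) (w : ℕ) (z : ZMod (2*t)) :
    (Finset.univ.filter fun uv : Fin 3 × Fin 3 =>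
      Gr false a' uv.1 = g a ∧ Gr false a' uv.2 = g (a+1) ∧
        Vl t false w uv.1 - Vl t false w uv.2 = z).card
    = (if a' = a ∧ (-((w : ℕ) : ZMod (2*t)) - ((w : ℕ) : ZMod (2*t)) = z) then 1 else 0) := by
  rw [Finset.card_filter, Fintype.sum_prod_type]
  simp only [Fin.sum_univ_three, Gr_f0, Gr_f1, Gr_f2, Vl_f0, Vl_f1, Vl_f2,
    g_eq_five_iff, five_eq_g_iff, g_eq_g_iff, sub_zero, zero_sub, sub_self,
    neg_neg, false_and, and_false, if_false, true_and, and_true, eq_self_iff_true,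
    and_self_left, add_zero, zero_add, add_left_inj,
    deadA, deadB, deadC, deadD, deadE, deadF, deadG, deadH, deadI, deadJ, deadK,
    deadL, deadM, deadN, liveA, liveB]

lemma c_true_T2 (a a' : Fin 5) (w : ℕ) (z : ZMod (2*t)) :
    (Finset.univ.filter fun uv : Fin 3 × Fin 3 =>
      Gr true a' uv.1 = g a ∧ Gr true a' uv.2 = g (a+1) ∧
        Vl t true w uv.1 - Vl t true w uv.2 = z).card
    = (if a' = a ∧ (((t+2*w : ℕ) : ZMod (2*t)) = z) then 1 else 0) := by
  rw [Finset.card_filter, Fintype.sum_prod_type]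
  simp only [Fin.sum_univ_three, Gr_t0, Gr_t1, Gr_t2, Vl_t0, Vl_t1, Vl_t2,
    g_eq_five_iff, five_eq_g_iff, g_eq_g_iff, sub_zero, zero_sub, sub_self,
    neg_neg, false_and, and_false, if_false, true_and, and_true, eq_self_iff_true,
    and_self_left, add_zero, zero_add, add_left_inj,
    deadA, deadB, deadC, deadD, deadE, deadF, deadG, deadH, deadI, deadJ, deadK,
    deadL, deadM, deadN, liveA, liveB]

lemma c_false_T3 (a a' : Fin 5) (w : ℕ) (z : ZMod (2*t)) :
    (Finset.univ.filter fun uv : Fin 3 × Fin 3 =>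
      Gr false a' uv.1 = g a ∧ Gr false a' uv.2 = g (a+2) ∧
        Vl t false w uv.1 - Vl t false w uv.2 = z).card = 0 := by
  rw [Finset.card_filter, Fintype.sum_prod_type]
  simp only [Fin.sum_univ_three, Gr_f0, Gr_f1, Gr_f2, Vl_f0, Vl_f1, Vl_f2,
    g_eq_five_iff, five_eq_g_iff, g_eq_g_iff, sub_zero, zero_sub, sub_self,
    neg_neg, false_and, and_false, if_false, true_and, and_true, eq_self_iff_true,
    and_self_left, add_zero, zero_add, add_left_inj,
    deadA, deadB, deadC, deadD, deadE, deadF, deadG, deadH, deadI, deadJ, deadK,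
    deadL, deadM, deadN, liveA, liveB]

lemma c_true_T3 (a a' : Fin 5) (w : ℕ) (z : ZMod (2*t)) :
    (Finset.univ.filter fun uv : Fin 3 × Fin 3 =>
      Gr true a' uv.1 = g a ∧ Gr true a' uv.2 = g (a+2) ∧
        Vl t true w uv.1 - Vl t true w uv.2 = z).card
    = (if a' + 1 = a ∧
          (-((t+2*w : ℕ) : ZMod (2*t)) - -((t+4*w : ℕ) : ZMod (2*t)) = z) then 1 else 0)
      + (if a' = a + 2 ∧ (-((t+4*w : ℕ) : ZMod (2*t)) = z) then 1 else 0) := by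
  rw [Finset.card_filter, Fintype.sum_prod_type]
  simp only [Fin.sum_univ_three, Gr_t0, Gr_t1, Gr_t2, Vl_t0, Vl_t1, Vl_t2,
    g_eq_five_iff, five_eq_g_iff, g_eq_g_iff, sub_zero, zero_sub, sub_self,
    neg_neg, false_and, and_false, if_false, true_and, and_true, eq_self_iff_true,
    and_self_left, add_zero, zero_add, add_left_inj,
    deadA, deadB, deadC, deadD, deadE, deadF, deadG, deadH, deadI, deadJ, deadK,
    deadL, deadM, deadN, liveA, liveB]

end CL


section CNT2
variable {t : ℕ}

lemma collapse1 (a : Fin 5) (P : Prop) [Decidable P] :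
    (∑ a' : Fin 5, if a' = a ∧ P then 1 else 0) = if P then 1 else 0 := by
  simp only [ite_and]
  rw [Finset.sum_ite_eq' Finset.univ a (fun _ => if P then 1 else 0)]
  simp

lemma collapse2 (a : Fin 5) (P : Prop) [Decidable P] :
    (∑ a' : Fin 5, if a' + 1 = a ∧ P then 1 else 0) = if P then 1 else 0 := by
  simp only [← eq_sub_iff_add_eq]
  exact collapse1 (a - 1) P

lemma collapse3 (a : Fin 5) (P : Prop) [Decidable P] :
    (∑ a' : Fin 5, if a' = a + 2 ∧ P then 1 else 0) = if P then 1 else 0 :=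
  collapse1 (a + 2) P

lemma cnt_T1 (ht : 3 ≤ t) (htodd : Odd t) (a : Fin 5) (z : ZMod (2*t)) :
    Cnt t (g a) 5 z
      = ((Finset.Icc 1 (t-1)).filter fun w => -((w : ℕ) : ZMod (2*t)) = z).card
        + ((Finset.Icc 1 (t-1)).filter fun w => ((w : ℕ) : ZMod (2*t)) = z).card := by
  rw [cnt_eq ht htodd, Fintype.sum_bool]
  have h1 : (∑ a' : Fin 5, ∑ w ∈ Finset.Icc 1 (t-1),
      (Finset.univ.filter fun uv : Fin 3 × Fin 3 =>
        Gr true a' uv.1 = g a ∧ Gr true a' uv.2 = 5 ∧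
          Vl t true w uv.1 - Vl t true w uv.2 = z).card) = 0 :=
    Finset.sum_eq_zero fun a' _ => Finset.sum_eq_zero fun w _ => c_true_T1 a a' w z
  rw [h1, zero_add]
  calc (∑ a' : Fin 5, ∑ w ∈ Finset.Icc 1 (t-1),
      (Finset.univ.filter fun uv : Fin 3 × Fin 3 =>
        Gr false a' uv.1 = g a ∧ Gr false a' uv.2 = 5 ∧
          Vl t false w uv.1 - Vl t false w uv.2 = z).card)
      = ∑ a' : Fin 5, ∑ w ∈ Finset.Icc 1 (t-1),
          ((if a' = a ∧ -((w : ℕ) : ZMod (2*t)) = z then 1 else 0)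
            + (if a' + 1 = a ∧ ((w : ℕ) : ZMod (2*t)) = z then 1 else 0)) :=
        Finset.sum_congr rfl fun a' _ => Finset.sum_congr rfl fun w _ => c_false_T1 a a' w z
    _ = ∑ w ∈ Finset.Icc 1 (t-1), ∑ a' : Fin 5,
          ((if a' = a ∧ -((w : ℕ) : ZMod (2*t)) = z then 1 else 0)
            + (if a' + 1 = a ∧ ((w : ℕ) : ZMod (2*t)) = z then 1 else 0)) :=
        Finset.sum_comm
    _ = ∑ w ∈ Finset.Icc 1 (t-1),
          ((if -((w : ℕ) : ZMod (2*t)) = z then 1 else 0)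
            + (if ((w : ℕ) : ZMod (2*t)) = z then 1 else 0)) := by
        refine Finset.sum_congr rfl fun w _ => ?_
        rw [Finset.sum_add_distrib, collapse1, collapse2]
    _ = _ := by
        rw [Finset.sum_add_distrib, Finset.card_filter, Finset.card_filter]

lemma cnt_T2 (ht : 3 ≤ t) (htodd : Odd t) (a : Fin 5) (z : ZMod (2*t)) :
    Cnt t (g a) (g (a+1)) z
      = ((Finset.Icc 1 (t-1)).filter fun w =>
            -((w : ℕ) : ZMod (2*t)) - ((w : ℕ) : ZMod (2*t)) = z).card
        + ((Finset.Icc 1 (t-1)).filter fun w => ((t+2*w : ℕ) : ZMod (2*t)) = z).card := by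
  rw [cnt_eq ht htodd, Fintype.sum_bool]
  have h1 : (∑ a' : Fin 5, ∑ w ∈ Finset.Icc 1 (t-1),
      (Finset.univ.filter fun uv : Fin 3 × Fin 3 =>
        Gr true a' uv.1 = g a ∧ Gr true a' uv.2 = g (a+1) ∧
          Vl t true w uv.1 - Vl t true w uv.2 = z).card)
      = ((Finset.Icc 1 (t-1)).filter fun w => ((t+2*w : ℕ) : ZMod (2*t)) = z).card := by
    calc (∑ a' : Fin 5, ∑ w ∈ Finset.Icc 1 (t-1),
        (Finset.univ.filter fun uv : Fin 3 × Fin 3 =>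
          Gr true a' uv.1 = g a ∧ Gr true a' uv.2 = g (a+1) ∧
            Vl t true w uv.1 - Vl t true w uv.2 = z).card)
        = ∑ a' : Fin 5, ∑ w ∈ Finset.Icc 1 (t-1),
            (if a' = a ∧ (((t+2*w : ℕ) : ZMod (2*t)) = z) then 1 else 0) :=
          Finset.sum_congr rfl fun a' _ => Finset.sum_congr rfl fun w _ => c_true_T2 a a' w z
      _ = ∑ w ∈ Finset.Icc 1 (t-1), ∑ a' : Fin 5,
            (if a' = a ∧ (((t+2*w : ℕ) : ZMod (2*t)) = z) then 1 else 0) := Finset.sum_comm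
      _ = ∑ w ∈ Finset.Icc 1 (t-1),
            (if ((t+2*w : ℕ) : ZMod (2*t)) = z then 1 else 0) :=
          Finset.sum_congr rfl fun w _ => collapse1 a _
      _ = _ := (Finset.card_filter _ _).symm
  have h2 : (∑ a' : Fin 5, ∑ w ∈ Finset.Icc 1 (t-1),
      (Finset.univ.filter fun uv : Fin 3 × Fin 3 =>
        Gr false a' uv.1 = g a ∧ Gr false a' uv.2 = g (a+1) ∧
          Vl t false w uv.1 - Vl t false w uv.2 = z).card)
      = ((Finset.Icc 1 (t-1)).filter fun w =>
          -((w : ℕ) : ZMod (2*t)) - ((w : ℕ) : ZMod (2*t)) = z).card := by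
    calc (∑ a' : Fin 5, ∑ w ∈ Finset.Icc 1 (t-1),
        (Finset.univ.filter fun uv : Fin 3 × Fin 3 =>
          Gr false a' uv.1 = g a ∧ Gr false a' uv.2 = g (a+1) ∧
            Vl t false w uv.1 - Vl t false w uv.2 = z).card)
        = ∑ a' : Fin 5, ∑ w ∈ Finset.Icc 1 (t-1),
            (if a' = a ∧ (-((w : ℕ) : ZMod (2*t)) - ((w : ℕ) : ZMod (2*t)) = z)
              then 1 else 0) :=
          Finset.sum_congr rfl fun a' _ => Finset.sum_congr rfl fun w _ => c_false_T2 a a' w z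
      _ = ∑ w ∈ Finset.Icc 1 (t-1), ∑ a' : Fin 5,
            (if a' = a ∧ (-((w : ℕ) : ZMod (2*t)) - ((w : ℕ) : ZMod (2*t)) = z)
              then 1 else 0) := Finset.sum_comm
      _ = ∑ w ∈ Finset.Icc 1 (t-1),
            (if -((w : ℕ) : ZMod (2*t)) - ((w : ℕ) : ZMod (2*t)) = z then 1 else 0) :=
          Finset.sum_congr rfl fun w _ => collapse1 a _
      _ = _ := (Finset.card_filter _ _).symm
  rw [h1, h2, add_comm]

lemma cnt_T3 (ht : 3 ≤ t) (htodd : Odd t) (a : Fin 5) (z : ZMod (2*t)) :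
    Cnt t (g a) (g (a+2)) z
      = ((Finset.Icc 1 (t-1)).filter fun w =>
            -((t+2*w : ℕ) : ZMod (2*t)) - -((t+4*w : ℕ) : ZMod (2*t)) = z).card
        + ((Finset.Icc 1 (t-1)).filter fun w => -((t+4*w : ℕ) : ZMod (2*t)) = z).card := by
  rw [cnt_eq ht htodd, Fintype.sum_bool]
  have h2 : (∑ a' : Fin 5, ∑ w ∈ Finset.Icc 1 (t-1),
      (Finset.univ.filter fun uv : Fin 3 × Fin 3 =>
        Gr false a' uv.1 = g a ∧ Gr false a' uv.2 = g (a+2) ∧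
          Vl t false w uv.1 - Vl t false w uv.2 = z).card) = 0 :=
    Finset.sum_eq_zero fun a' _ => Finset.sum_eq_zero fun w _ => c_false_T3 a a' w z
  rw [h2, add_zero]
  calc (∑ a' : Fin 5, ∑ w ∈ Finset.Icc 1 (t-1),
      (Finset.univ.filter fun uv : Fin 3 × Fin 3 =>
        Gr true a' uv.1 = g a ∧ Gr true a' uv.2 = g (a+2) ∧
          Vl t true w uv.1 - Vl t true w uv.2 = z).card)
      = ∑ a' : Fin 5, ∑ w ∈ Finset.Icc 1 (t-1),
          ((if a' + 1 = a ∧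
              (-((t+2*w : ℕ) : ZMod (2*t)) - -((t+4*w : ℕ) : ZMod (2*t)) = z)
             then 1 else 0)
            + (if a' = a + 2 ∧ (-((t+4*w : ℕ) : ZMod (2*t)) = z) then 1 else 0)) :=
        Finset.sum_congr rfl fun a' _ => Finset.sum_congr rfl fun w _ => c_true_T3 a a' w z
    _ = ∑ w ∈ Finset.Icc 1 (t-1), ∑ a' : Fin 5,
          ((if a' + 1 = a ∧
              (-((t+2*w : ℕ) : ZMod (2*t)) - -((t+4*w : ℕ) : ZMod (2*t)) = z)
             then 1 else 0)
            + (if a' = a + 2 ∧ (-((t+4*w : ℕ) : ZMod (2*t)) = z) then 1 else 0)) :=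
        Finset.sum_comm
    _ = ∑ w ∈ Finset.Icc 1 (t-1),
          ((if -((t+2*w : ℕ) : ZMod (2*t)) - -((t+4*w : ℕ) : ZMod (2*t)) = z then 1 else 0)
            + (if -((t+4*w : ℕ) : ZMod (2*t)) = z then 1 else 0)) := by
        refine Finset.sum_congr rfl fun w _ => ?_
        rw [Finset.sum_add_distrib, collapse2, collapse3]
    _ = _ := by
        rw [Finset.sum_add_distrib, Finset.card_filter, Finset.card_filter]

end CNT2


section Counts
variable {t : ℕ}

lemma filter_card_one {s : Finset ℕ} {p : ℕ → Prop} [DecidablePred p]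
    (w : ℕ) (hw : w ∈ s) (hp : p w) (hu : ∀ x ∈ s, p x → x = w) :
    (s.filter p).card = 1 := by
  rw [Finset.card_eq_one]
  refine ⟨w, ?_⟩
  ext x
  simp only [Finset.mem_filter, Finset.mem_singleton]
  constructor
  · rintro ⟨h1, h2⟩; exact hu x h1 h2
  · rintro rfl; exact ⟨hw, hp⟩

lemma filter_card_zero {s : Finset ℕ} {p : ℕ → Prop} [DecidablePred p]
    (h : ∀ x ∈ s, ¬ p x) : (s.filter p).card = 0 := by
  rw [Finset.card_eq_zero, Finset.filter_eq_empty_iff]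
  exact h

lemma neg_cast_eq_iff (ht : 3 ≤ t) (a : ℕ) (z : ZMod (2*t)) :
    (-(a : ZMod (2*t)) = z) ↔ a % (2*t) = (-z).val := by
  rw [neg_eq_iff_eq_neg, cast_eq_z ht]

lemma cP (ht : 3 ≤ t) (htodd : Odd t) (z : ZMod (2*t)) :
    ((Finset.Icc 1 (t-1)).filter fun w => ((w : ℕ) : ZMod (2*t)) = z).card
      = if 1 ≤ z.val ∧ z.val ≤ t-1 then 1 else 0 := by
  have hvlt := val_lt' ht z
  split_ifs with h
  · refine filter_card_one z.val (Finset.mem_Icc.2 (by omega)) ?_ ?_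
    · rw [cast_eq_z ht]; exact Nat.mod_eq_of_lt (by omega)
    · intro x hx hp
      rw [Finset.mem_Icc] at hx
      rw [cast_eq_z ht, Nat.mod_eq_of_lt (by omega)] at hp
      omega
  · refine filter_card_zero fun x hx hp => ?_
    rw [Finset.mem_Icc] at hx
    rw [cast_eq_z ht, Nat.mod_eq_of_lt (by omega)] at hp
    omega

lemma cR (ht : 3 ≤ t) (htodd : Odd t) (z : ZMod (2*t)) :
    ((Finset.Icc 1 (t-1)).filter fun w => -((w : ℕ) : ZMod (2*t)) = z).card
      = if t+1 ≤ z.val ∧ z.val ≤ 2*t-1 then 1 else 0 := by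
  have hvlt := val_lt' ht z
  split_ifs with h
  · have hz0 : z ≠ 0 := by rw [Ne, z_eq_zero_iff ht]; omega
    have hnv := neg_val' ht hz0
    refine filter_card_one (2*t - z.val) (Finset.mem_Icc.2 (by omega)) ?_ ?_
    · rw [neg_cast_eq_iff ht, hnv]; exact Nat.mod_eq_of_lt (by omega)
    · intro x hx hp
      rw [Finset.mem_Icc] at hx
      rw [neg_cast_eq_iff ht, hnv, Nat.mod_eq_of_lt (by omega)] at hp
      omega
  · refine filter_card_zero fun x hx hp => ?_
    rw [Finset.mem_Icc] at hx
    rw [neg_cast_eq_iff ht, Nat.mod_eq_of_lt (by omega)] at hp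
    by_cases hz0 : z = 0
    · rw [hz0, neg_zero, ZMod.val_zero] at hp; omega
    · rw [neg_val' ht hz0] at hp; omega

lemma cQ (ht : 3 ≤ t) (htodd : Odd t) (z : ZMod (2*t)) :
    ((Finset.Icc 1 (t-1)).filter fun w =>
        -((w : ℕ) : ZMod (2*t)) - ((w : ℕ) : ZMod (2*t)) = z).card
      = if z.val % 2 = 0 ∧ z.val ≠ 0 then 1 else 0 := by
  have hvlt := val_lt' ht z
  have hrw : ∀ w : ℕ, (-((w : ℕ) : ZMod (2*t)) - ((w : ℕ) : ZMod (2*t)) = z)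
      ↔ (-((2*w : ℕ) : ZMod (2*t)) = z) := by
    intro w
    constructor <;> intro hh <;> rw [← hh] <;> push_cast <;> ring
  split_ifs with h
  · have hz0 : z ≠ 0 := by rw [Ne, z_eq_zero_iff ht]; omega
    have hnv := neg_val' ht hz0
    refine filter_card_one (t - z.val/2) (Finset.mem_Icc.2 (by omega)) ?_ ?_
    · rw [hrw, neg_cast_eq_iff ht, hnv, Nat.mod_eq_of_lt (by omega)]; omega
    · intro x hx hp
      rw [Finset.mem_Icc] at hx
      rw [hrw, neg_cast_eq_iff ht, hnv, Nat.mod_eq_of_lt (by omega)] at hp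
      omega
  · refine filter_card_zero fun x hx hp => ?_
    rw [Finset.mem_Icc] at hx
    rw [hrw, neg_cast_eq_iff ht, Nat.mod_eq_of_lt (by omega)] at hp
    by_cases hz0 : z = 0
    · rw [hz0, neg_zero, ZMod.val_zero] at hp; omega
    · rw [neg_val' ht hz0] at hp; omega

lemma cE (ht : 3 ≤ t) (htodd : Odd t) (z : ZMod (2*t)) :
    ((Finset.Icc 1 (t-1)).filter fun w =>
        -((t+2*w : ℕ) : ZMod (2*t)) - -((t+4*w : ℕ) : ZMod (2*t)) = z).card
      = if z.val % 2 = 0 ∧ z.val ≠ 0 then 1 else 0 := by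
  have hvlt := val_lt' ht z
  have hrw : ∀ w : ℕ, (-((t+2*w : ℕ) : ZMod (2*t)) - -((t+4*w : ℕ) : ZMod (2*t)) = z)
      ↔ (((2*w : ℕ) : ZMod (2*t)) = z) := by
    intro w
    constructor <;> intro hh <;> rw [← hh] <;> push_cast <;> ring
  split_ifs with h
  · refine filter_card_one (z.val/2) (Finset.mem_Icc.2 (by omega)) ?_ ?_
    · rw [hrw, cast_eq_z ht, Nat.mod_eq_of_lt (by omega)]; omega
    · intro x hx hp
      rw [Finset.mem_Icc] at hx
      rw [hrw, cast_eq_z ht, Nat.mod_eq_of_lt (by omega)] at hp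
      omega
  · refine filter_card_zero fun x hx hp => ?_
    rw [Finset.mem_Icc] at hx
    rw [hrw, cast_eq_z ht, Nat.mod_eq_of_lt (by omega)] at hp
    omega

lemma cU (ht : 3 ≤ t) (htodd : Odd t) (z : ZMod (2*t)) :
    ((Finset.Icc 1 (t-1)).filter fun w => ((t+2*w : ℕ) : ZMod (2*t)) = z).card
      = if z.val % 2 = 1 ∧ z.val ≠ t then 1 else 0 := by
  obtain ⟨k, hk⟩ := htodd
  have hvlt := val_lt' ht z
  split_ifs with h
  · refine filter_card_one (if t < z.val then (z.val - t)/2 else (z.val + t)/2)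
      (Finset.mem_Icc.2 (by split_ifs <;> omega)) ?_ ?_
    · rw [cast_eq_z ht]
      split_ifs with h1
      · have he : t + 2*((z.val - t)/2) = z.val := by omega
        rw [he]; exact Nat.mod_eq_of_lt (by omega)
      · have he : t + 2*((z.val + t)/2) = z.val + 2*t := by omega
        rw [he]
        have : z.val + 2*t = z.val + (2*t)*1 := by ring
        rw [this, Nat.add_mul_mod_self_left]
        exact Nat.mod_eq_of_lt (by omega)
    · intro x hx hp
      rw [Finset.mem_Icc] at hx
      rw [cast_eq_z ht] at hp
      obtain ⟨q, hq, he, hl⟩ := mod_char (t+2*x) (2*t) (by omega) (by omega)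
      rw [hp] at he
      split_ifs with h1 <;> interval_cases q <;> omega
  · refine filter_card_zero fun x hx hp => ?_
    rw [Finset.mem_Icc] at hx
    rw [cast_eq_z ht] at hp
    obtain ⟨q, hq, he, hl⟩ := mod_char (t+2*x) (2*t) (by omega) (by omega)
    rw [hp] at he
    interval_cases q <;> omega

lemma cW (ht : 3 ≤ t) (htodd : Odd t) (z : ZMod (2*t)) :
    ((Finset.Icc 1 (t-1)).filter fun w => -((t+4*w : ℕ) : ZMod (2*t)) = z).card
      = if z.val % 2 = 1 ∧ z.val ≠ t then 1 else 0 := by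
  obtain ⟨k, hk⟩ := htodd
  have hvlt := val_lt' ht z
  split_ifs with h
  · have hz0 : z ≠ 0 := by rw [Ne, z_eq_zero_iff ht]; omega
    have hnv := neg_val' ht hz0
    set s := 2*t - z.val with hs
    have hs_odd : s % 2 = 1 := by omega
    have hs_ne : s ≠ t := by omega
    have hs_lt : s < 2*t := by omega
    have hs_pos : 1 ≤ s := by omega
    have hex : ∃ w, (1 ≤ w ∧ w ≤ t-1) ∧
        (t + 4*w = s ∨ t + 4*w = s + (2*t)*1 ∨ t + 4*w = s + (2*t)*2) := by
      rcases Nat.lt_or_ge t s with h1 | h1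
      · rcases Nat.even_or_odd ((s - t)/2) with ⟨m, hm⟩ | ⟨m, hm⟩
        · exact ⟨(s - t)/2/2, by omega, by omega⟩
        · exact ⟨((s - t)/2 + t)/2, by omega, by omega⟩
      · rcases Nat.even_or_odd ((s + t)/2) with ⟨m, hm⟩ | ⟨m, hm⟩
        · exact ⟨(s + t)/2/2, by omega, by omega⟩
        · exact ⟨((s + t)/2 + t)/2, by omega, by omega⟩
    obtain ⟨w, hwb, hwkey⟩ := hex
    have hwmem : w ∈ Finset.Icc 1 (t-1) := Finset.mem_Icc.2 hwb
    have hwmod : (t + 4*w) % (2*t) = s := by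
      rcases hwkey with hk2 | hk2 | hk2 <;> rw [hk2] <;>
        simp [Nat.add_mul_mod_self_left, Nat.mod_eq_of_lt hs_lt]
    refine filter_card_one w hwmem ?_ ?_
    · rw [neg_cast_eq_iff ht, hnv]; exact hwmod
    · intro x hx hp
      rw [Finset.mem_Icc] at hx
      rw [neg_cast_eq_iff ht, hnv] at hp
      obtain ⟨q, hq, he, hl⟩ := mod_char (t+4*x) (2*t) (by omega) (by omega)
      obtain ⟨q', hq', he', hl'⟩ := mod_char (t+4*w) (2*t) (by omega) (by omega)
      rw [hp] at he
      rw [hwmod] at he'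
      interval_cases q <;> interval_cases q' <;> omega
  · refine filter_card_zero fun x hx hp => ?_
    rw [Finset.mem_Icc] at hx
    rw [neg_cast_eq_iff ht] at hp
    obtain ⟨q, hq, he, hl⟩ := mod_char (t+4*x) (2*t) (by omega) (by omega)
    rw [hp] at he
    by_cases hz0 : z = 0
    · rw [hz0, neg_zero, ZMod.val_zero] at he
      interval_cases q <;> omega
    · rw [neg_val' ht hz0] at he
      interval_cases q <;> omega

end Counts


section Final
variable {t : ℕ}

lemma cnt_swap (i j : Fin 6) (z : ZMod (2*t)) : Cnt t i j z = Cnt t j i (-z) := by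
  unfold Cnt
  refine Finset.sum_congr rfl fun b _ => ?_
  refine Finset.card_bij' (fun pq _ => (pq.2, pq.1)) (fun pq _ => (pq.2, pq.1)) ?_ ?_ ?_ ?_
  · rintro ⟨p, q⟩ hpq
    simp only [Finset.mem_filter, Finset.mem_product] at hpq ⊢
    obtain ⟨⟨h1, h2⟩, h3, h4, h5⟩ := hpq
    exact ⟨⟨h2, h1⟩, h4, h3, by rw [← h5]; ring⟩
  · rintro ⟨p, q⟩ hpq
    simp only [Finset.mem_filter, Finset.mem_product] at hpq ⊢
    obtain ⟨⟨h1, h2⟩, h3, h4, h5⟩ := hpq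
    refine ⟨⟨h2, h1⟩, h4, h3, ?_⟩
    rw [← neg_sub p.2 q.2, h5, neg_neg]
  · rintro ⟨p, q⟩ _; rfl
  · rintro ⟨p, q⟩ _; rfl

lemma classify : ∀ i j : Fin 6, i ≠ j →
    (∃ a : Fin 5, i = g a ∧ j = 5) ∨ (∃ a : Fin 5, j = g a ∧ i = 5) ∨
    (∃ a : Fin 5, i = g a ∧ j = g (a+1)) ∨ (∃ a : Fin 5, j = g a ∧ i = g (a+1)) ∨
    (∃ a : Fin 5, i = g a ∧ j = g (a+2)) ∨ (∃ a : Fin 5, j = g a ∧ i = g (a+2)) := by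
  decide

lemma final_T1 (ht : 3 ≤ t) (htodd : Odd t) (a : Fin 5) (z : ZMod (2*t)) :
    (z ∈ AddSubgroup.zmultiples ((t : ℕ) : ZMod (2*t)) → Cnt t (g a) 5 z = 0) ∧
    (z ∉ AddSubgroup.zmultiples ((t : ℕ) : ZMod (2*t)) → Cnt t (g a) 5 z = 1) := by
  have hvlt := val_lt' ht z
  have hS := memS_iff ht z
  have h0 := z_eq_zero_iff ht z
  have hT := z_eq_t_iff ht z
  rw [cnt_T1 ht htodd, cR ht htodd, cP ht htodd]
  obtain ⟨k, hk⟩ := htodd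
  constructor
  · intro hz
    rw [hS, h0, hT] at hz
    split_ifs <;> omega
  · intro hz
    rw [hS, h0, hT] at hz
    push_neg at hz
    split_ifs <;> omega

lemma final_T2 (ht : 3 ≤ t) (htodd : Odd t) (a : Fin 5) (z : ZMod (2*t)) :
    (z ∈ AddSubgroup.zmultiples ((t : ℕ) : ZMod (2*t)) → Cnt t (g a) (g (a+1)) z = 0) ∧
    (z ∉ AddSubgroup.zmultiples ((t : ℕ) : ZMod (2*t)) → Cnt t (g a) (g (a+1)) z = 1) := by
  have hvlt := val_lt' ht z
  have hS := memS_iff ht z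
  have h0 := z_eq_zero_iff ht z
  have hT := z_eq_t_iff ht z
  rw [cnt_T2 ht htodd, cQ ht htodd, cU ht htodd]
  obtain ⟨k, hk⟩ := htodd
  constructor
  · intro hz
    rw [hS, h0, hT] at hz
    split_ifs <;> omega
  · intro hz
    rw [hS, h0, hT] at hz
    push_neg at hz
    split_ifs <;> omega

lemma final_T3 (ht : 3 ≤ t) (htodd : Odd t) (a : Fin 5) (z : ZMod (2*t)) :
    (z ∈ AddSubgroup.zmultiples ((t : ℕ) : ZMod (2*t)) → Cnt t (g a) (g (a+2)) z = 0) ∧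
    (z ∉ AddSubgroup.zmultiples ((t : ℕ) : ZMod (2*t)) → Cnt t (g a) (g (a+2)) z = 1) := by
  have hvlt := val_lt' ht z
  have hS := memS_iff ht z
  have h0 := z_eq_zero_iff ht z
  have hT := z_eq_t_iff ht z
  rw [cnt_T3 ht htodd, cE ht htodd, cW ht htodd]
  obtain ⟨k, hk⟩ := htodd
  constructor
  · intro hz
    rw [hS, h0, hT] at hz
    split_ifs <;> omega
  · intro hz
    rw [hS, h0, hT] at hz
    push_neg at hz
    split_ifs <;> omega

lemma neg_memS_iff (ht : 3 ≤ t) (z : ZMod (2*t)) :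
    -z ∈ AddSubgroup.zmultiples ((t : ℕ) : ZMod (2*t)) ↔
      z ∈ AddSubgroup.zmultiples ((t : ℕ) : ZMod (2*t)) :=
  neg_mem_iff

lemma final_all (ht : 3 ≤ t) (htodd : Odd t) (i j : Fin 6) (hij : i ≠ j) (z : ZMod (2*t)) :
    (z ∈ AddSubgroup.zmultiples ((t : ℕ) : ZMod (2*t)) → Cnt t i j z = 0) ∧
    (z ∉ AddSubgroup.zmultiples ((t : ℕ) : ZMod (2*t)) → Cnt t i j z = 1) := by
  rcases classify i j hij with ⟨a, rfl, rfl⟩ | ⟨a, rfl, rfl⟩ | ⟨a, rfl, rfl⟩ |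
    ⟨a, rfl, rfl⟩ | ⟨a, rfl, rfl⟩ | ⟨a, rfl, rfl⟩
  · exact final_T1 ht htodd a z
  · rw [cnt_swap]
    constructor
    · intro hz; exact (final_T1 ht htodd a (-z)).1 ((neg_memS_iff ht z).2 hz)
    · intro hz; exact (final_T1 ht htodd a (-z)).2 (fun hc => hz ((neg_memS_iff ht z).1 hc))
  · exact final_T2 ht htodd a z
  · rw [cnt_swap]
    constructor
    · intro hz; exact (final_T2 ht htodd a (-z)).1 ((neg_memS_iff ht z).2 hz)
    · intro hz; exact (final_T2 ht htodd a (-z)).2 (fun hc => hz ((neg_memS_iff ht z).1 hc))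
  · exact final_T3 ht htodd a z
  · rw [cnt_swap]
    constructor
    · intro hz; exact (final_T3 ht htodd a (-z)).1 ((neg_memS_iff ht z).2 hz)
    · intro hz; exact (final_T3 ht htodd a (-z)).2 (fun hc => hz ((neg_memS_iff ht z).1 hc))

end Final


end SCHAux


end SCHGDDproof

/-- Lemma 6.10: for every odd integer `t ≥ 3` there exists a `3`-SCHGDD of type
`(6, 2^t)`. -/
theorem schgdd_6_2t_exists (t : ℕ) (htodd : Odd t) (ht : 3 ≤ t) :
    ExistsSCHGDD 3 6 2 t := by
  refine ⟨SCHAux.BB t, ?_, ?_, ?_⟩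
  · intro b hb
    obtain ⟨d, hd, rfl⟩ := Finset.mem_image.1 hb
    unfold SCHAux.blk
    rw [Finset.card_image_of_injective _ (SCHAux.pts_injective t d)]
    simp
  · intro b hb p hp q hq hpq
    obtain ⟨d, hd, rfl⟩ := Finset.mem_image.1 hb
    unfold SCHAux.blk at hp hq
    obtain ⟨u, -, rfl⟩ := Finset.mem_image.1 hp
    obtain ⟨v, -, rfl⟩ := Finset.mem_image.1 hq
    have h2 : SCHAux.Gr d.1 d.2.1 u = SCHAux.Gr d.1 d.2.1 v := hpq
    rw [SCHAux.Gr_injective d.1 d.2.1 h2]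
  · intro i j hij z
    exact SCHAux.final_all ht htodd i j hij z
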